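/- For every k ≥ 0 and n > 0, the size s(k,n) of the threshold formula th(k,n) satisfies s(k,n) ≤ n^{h·log n} for h = 2/(log 3 − log 2), hence s(k,n) is n^{O(log n)} uniformly in k. -/

import Mathlib

/-- Size of the recursively defined threshold formula `th k n`. -/
def sz : ℕ → ℕ → ℕ
  | 0, _ => 1
  | k+1, n =>
    if h1 : n < k + 1 then 1
    else if h2 : n = 1 then 1
    else
      ∑ i ∈ Finset.range (k + 2),
        if i ≤ n / 2 ∧ k + 1 - i ≤ n - n / 2 then
          sz i (n / 2) + sz (k + 1 - i) (n - n / 2)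
        else 0
  termination_by k n => n
  decreasing_by all_goals omega

noncomputable def Hc : ℝ := 2 / (Real.logb 2 3 - Real.logb 2 2)

noncomputable def Fc (n : ℕ) : ℝ := (n : ℝ) ^ (Hc * Real.logb 2 n)

lemma logb23_gt : 1 < Real.logb 2 3 := by
  have := Real.logb_lt_logb (b := 2) one_lt_two (x := 2) (y := 3) (by norm_num) (by norm_num)
  rwa [Real.logb_self_eq_one one_lt_two] at this

lemma logb23_lt : Real.logb 2 3 ≤ 8/5 := by
  have h2 : (3:ℝ) ≤ (2:ℝ) ^ ((8:ℝ)/5) := by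
    have h5 : ((3:ℝ)^(5:ℕ)) ≤ ((2:ℝ) ^ ((8:ℝ)/5))^(5:ℕ) := by
      rw [← Real.rpow_natCast ((2:ℝ) ^ ((8:ℝ)/5)) 5, ← Real.rpow_mul (by norm_num)]
      rw [show ((8:ℝ)/5)*(5:ℕ) = ((8:ℕ):ℝ) by push_cast; ring, Real.rpow_natCast]
      norm_num
    exact le_of_pow_le_pow_left₀ (by norm_num) (by positivity) h5
  exact (Real.logb_le_iff_le_rpow one_lt_two (by norm_num)).mpr h2

lemma Hc_pos : 0 < Hc := by
  have := logb23_gt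
  unfold Hc
  rw [Real.logb_self_eq_one one_lt_two]
  exact div_pos (by norm_num) (by linarith)

lemma Fc_one_le {n : ℕ} (hn : 1 ≤ n) : 1 ≤ Fc n := by
  apply Real.one_le_rpow (by exact_mod_cast hn)
  exact mul_nonneg Hc_pos.le (Real.logb_nonneg one_lt_two (by exact_mod_cast hn))

lemma Fc_nonneg (n : ℕ) : 0 ≤ Fc n := Real.rpow_nonneg (Nat.cast_nonneg n) _

lemma Fc_mono {a b : ℕ} (ha : 1 ≤ a) (hab : a ≤ b) : Fc a ≤ Fc b := by
  have hb : (1:ℝ) ≤ (b:ℝ) := by exact_mod_cast ha.trans hab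
  calc Fc a = (a:ℝ) ^ (Hc * Real.logb 2 a) := rfl
    _ ≤ (b:ℝ) ^ (Hc * Real.logb 2 a) :=
        Real.rpow_le_rpow (Nat.cast_nonneg a) (by exact_mod_cast hab)
          (mul_nonneg Hc_pos.le (Real.logb_nonneg one_lt_two (by exact_mod_cast ha)))
    _ ≤ (b:ℝ) ^ (Hc * Real.logb 2 b) := by
        apply Real.rpow_le_rpow_of_exponent_le hb
        refine mul_le_mul_of_nonneg_left ?_ Hc_pos.le
        exact Real.logb_le_logb_of_le one_lt_two (by exact_mod_cast ha) (by exact_mod_cast hab)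

lemma key_ineq {n : ℕ} (hn : 2 ≤ n) :
    2 * ((n:ℝ) + 1) * Fc (n - n/2) ≤ Fc n := by
  rcases eq_or_lt_of_le hn with h2 | h3
  · -- n = 2
    subst h2
    have hm : (2:ℕ) - 2/2 = 1 := by norm_num
    rw [hm]
    have hF1 : Fc 1 = 1 := by
      unfold Fc; simp
    rw [hF1]
    have hH : (3:ℝ) ≤ Hc := by
      have ht := logb23_gt
      have ht' := logb23_lt
      unfold Hc
      rw [Real.logb_self_eq_one one_lt_two]
      rw [le_div_iff₀ (by linarith)]
      linarith
    have h8 : (6:ℝ) ≤ (2:ℝ) ^ (3:ℝ) := by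
      rw [show (3:ℝ) = ((3:ℕ):ℝ) by norm_num, Real.rpow_natCast]; norm_num
    have := Real.rpow_le_rpow_of_exponent_le (x := 2) one_le_two hH
    have hFc : Fc 2 = (2:ℝ) ^ Hc := by
      unfold Fc
      norm_num [Real.logb_self_eq_one]
    rw [hFc]
    push_cast
    linarith
  · -- n ≥ 3
    have hn3 : 3 ≤ n := h3
    set m : ℕ := n - n/2 with hm
    have hm2 : 2 ≤ m := by omega
    have h3m : 3 * m ≤ 2 * n := by omega
    have hmpos : (0:ℝ) < (m:ℝ) := by exact_mod_cast (by omega : 0 < m)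
    have hnpos : (0:ℝ) < (n:ℝ) := by exact_mod_cast (by omega : 0 < n)
    set l2 := Real.log 2 with hl2
    set l3 := Real.log 3 with hl3
    set a := Real.log n with ha
    set b := Real.log m with hb
    set p := Real.log ((n:ℝ) + 1) with hp
    have hl2pos : 0 < l2 := Real.log_pos (by norm_num)
    have hl3l2 : l2 < l3 := Real.log_lt_log (by norm_num) (by norm_num)
    have hbl2 : l2 ≤ b := Real.log_le_log (by norm_num) (by exact_mod_cast hm2)
    have hab : l3 - l2 ≤ a - b := by
      have h1 : (3:ℝ) * m ≤ 2 * n := by exact_mod_cast h3m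
      have h2 : Real.log ((3:ℝ) * m) ≤ Real.log ((2:ℝ) * n) :=
        Real.log_le_log (by positivity) h1
      rw [Real.log_mul (by norm_num) (ne_of_gt hmpos),
          Real.log_mul (by norm_num) (ne_of_gt hnpos)] at h2
      simp only [← hl2, ← hl3, ← ha, ← hb] at h2
      linarith
    have hpa : p ≤ l2 + a := by
      have h1 : ((n:ℝ) + 1) ≤ 2 * n := by
        have : (1:ℝ) ≤ (n:ℝ) := by exact_mod_cast (by omega : 1 ≤ n)
        linarith
      have h2 : p ≤ Real.log ((2:ℝ) * n) := Real.log_le_log (by positivity) h1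
      rw [Real.log_mul (by norm_num) (ne_of_gt hnpos)] at h2
      simpa [← hl2, ← ha] using h2
    -- express Fc n and Fc m
    have hHc : Hc = 2 * l2 / (l3 - l2) := by
      unfold Hc
      rw [Real.logb_self_eq_one one_lt_two, Real.logb, ← hl2, ← hl3]
      rw [show l3 / l2 - 1 = (l3 - l2) / l2 by field_simp, div_div_eq_mul_div]
    have hc : (0:ℝ) < l3 - l2 := by linarith
    -- the log inequality
    have hlog : l2 + p + 2 * b^2 / (l3 - l2) ≤ 2 * a^2 / (l3 - l2) := by
      have hgoal : (l2 + p) * (l3 - l2) ≤ 2 * a^2 - 2 * b^2 := by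
        nlinarith [mul_nonneg (sub_nonneg.mpr hab) (by linarith : (0:ℝ) ≤ a + b),
          mul_nonneg (sub_nonneg.mpr hbl2) hc.le,
          mul_nonneg (by linarith : (0:ℝ) ≤ a) hc.le]
      have h1 : l2 + p ≤ (2 * a^2 - 2 * b^2) / (l3 - l2) := (le_div_iff₀ hc).mpr hgoal
      rw [sub_div] at h1
      linarith
    -- convert to the rpow statement
    have hFm : Fc m = Real.exp (Hc * (b / l2) * b) := by
      unfold Fc
      rw [Real.rpow_def_of_pos hmpos, Real.logb, ← hl2, ← hb]
      ring_nf
    have hFn : Fc n = Real.exp (Hc * (a / l2) * a) := by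
      unfold Fc
      rw [Real.rpow_def_of_pos hnpos, Real.logb, ← hl2, ← ha]
      ring_nf
    have hexp2 : Real.exp l2 = 2 := by rw [hl2]; exact Real.exp_log (by norm_num)
    have hexpp : Real.exp p = (n:ℝ) + 1 := by rw [hp]; exact Real.exp_log (by positivity)
    have hLHS : 2 * ((n:ℝ) + 1) * Fc m = Real.exp (l2 + p + Hc * (b / l2) * b) := by
      rw [hFm, Real.exp_add, Real.exp_add, hexp2, hexpp]
    rw [hLHS, hFn, Real.exp_le_exp]
    have e1 : Hc * (b / l2) * b = 2 * b^2 / (l3 - l2) := by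
      rw [hHc]; field_simp
    have e2 : Hc * (a / l2) * a = 2 * a^2 / (l3 - l2) := by
      rw [hHc]; field_simp
    rw [e1, e2]
    exact hlog

lemma sz_le_Fc : ∀ n, 0 < n → ∀ k, (sz k n : ℝ) ≤ Fc n := by
  intro n
  induction n using Nat.strong_induction_on with
  | _ n IH =>
    intro hn k
    match k with
    | 0 => simpa [sz] using Fc_one_le hn
    | k + 1 =>
      rw [sz]
      split_ifs with h1 h2
      · simpa using Fc_one_le hn
      · simpa using Fc_one_le hn
      · have hn2 : 2 ≤ n := by omega
        have hk : k + 1 ≤ n := by omega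
        push_cast
        set m : ℕ := n - n/2 with hm
        calc (∑ i ∈ Finset.range (k + 2),
                if i ≤ n / 2 ∧ k + 1 - i ≤ n - n / 2 then
                  ((sz i (n / 2) : ℝ) + (sz (k + 1 - i) (n - n / 2) : ℝ)) else 0)
            ≤ ∑ i ∈ Finset.range (k + 2), 2 * Fc m := by
              apply Finset.sum_le_sum
              intro i _
              split_ifs with hcond
              · have hA : (sz i (n/2) : ℝ) ≤ Fc (n/2) :=
                  IH (n/2) (by omega) (by omega) i
                have hA' : Fc (n/2) ≤ Fc m := Fc_mono (by omega) (by omega)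
                have hB : (sz (k + 1 - i) (n - n/2) : ℝ) ≤ Fc m :=
                  IH (n - n/2) (by omega) (by omega) (k + 1 - i)
                rw [← hm] at hB ⊢
                linarith
              · have := Fc_nonneg m
                linarith
          _ = (k + 2 : ℝ) * (2 * Fc m) := by
              rw [Finset.sum_const, Finset.card_range, nsmul_eq_mul]
              push_cast; ring
          _ ≤ ((n:ℝ) + 1) * (2 * Fc m) := by
              have h1 : (k + 2 : ℝ) ≤ (n:ℝ) + 1 := by
                have : (k + 1 : ℝ) ≤ (n:ℝ) := by exact_mod_cast hk
                linarith
              have h2 : 0 ≤ 2 * Fc m := by have := Fc_nonneg m; linarith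
              exact mul_le_mul_of_nonneg_right h1 h2
          _ ≤ Fc n := by
              have := key_ineq hn2
              rw [← hm] at this
              linarith

theorem sz_quasipoly (k n : ℕ) (hn : 0 < n) :
    (sz k n : ℝ) ≤
      (n : ℝ) ^ ((2 / (Real.logb 2 3 - Real.logb 2 2)) * Real.logb 2 n) := by
  exact sz_le_Fc n hn k
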